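/- Let ℓ be a prime and A a finite abelian ℓ-group of ℓ-rank r and ℓ²-rank s, and let A_{⊕i} = A ⊕ (Z/ℓ)^i. Then |Aut(A_{⊕i})| = ℓ^{2ir+i²} · ((ℓ^{-1})_{r−s+i} / (ℓ^{-1})_{r−s}) · |Aut(A)|, where (ℓ^{-1})_m = ∏_{j=1}^m (1 − ℓ^{-j}). -/

import Mathlib

/-- `(ℓ^{-1})_m = ∏_{j=1}^m (1 − ℓ^{-j})`. -/
noncomputable def lPoch (ℓ : ℕ) (m : ℕ) : ℝ := ∏ j ∈ Finset.range m, (1 - ((ℓ : ℝ))⁻¹ ^ (j + 1))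

def smulHom (ℓ : ℕ) (G : Type*) [AddCommGroup G] : G →+ G where
  toFun := (ℓ • ·)
  map_zero' := smul_zero _
  map_add' := fun a b => smul_add ℓ a b

noncomputable def kappa (ℓ : ℕ) {G : Type*} [AddCommGroup G] (g : G) (hg : ℓ • g = 0) :
    ZMod ℓ →+ G :=
  ZMod.lift ℓ ⟨zmultiplesHom G g, by simpa using hg⟩

lemma kappa_natCast (ℓ : ℕ) {G : Type*} [AddCommGroup G] (g : G) (hg : ℓ • g = 0) (k : ℕ) :
    kappa ℓ g hg (k : ZMod ℓ) = k • g := by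
  have : ((k : ℤ) : ZMod ℓ) = (k : ZMod ℓ) := by push_cast; rfl
  rw [← this, kappa, ZMod.lift_coe]
  simp [zmultiplesHom]

lemma kappa_one (ℓ : ℕ) {G : Type*} [AddCommGroup G] (g : G) (hg : ℓ • g = 0) :
    kappa ℓ g hg 1 = g := by
  have := kappa_natCast ℓ g hg 1
  simpa using this

lemma kappa_apply (ℓ : ℕ) [NeZero ℓ] {G : Type*} [AddCommGroup G] (g : G) (hg : ℓ • g = 0)
    (e : ZMod ℓ) : kappa ℓ g hg e = e.val • g := by
  have h : ((e.val : ℕ) : ZMod ℓ) = e := ZMod.natCast_rightInverse e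
  conv_lhs => rw [← h]
  rw [kappa_natCast ℓ g hg e.val]

-- separating functional on a vector space
lemma exists_functional {F V : Type*} [Field F] [AddCommGroup V] [Module F V] {v : V}
    (hv : v ≠ 0) : ∃ lf : V →ₗ[F] F, lf v = 1 := by
  classical
  let b := Module.Basis.ofVectorSpace F V
  have hrepr : b.repr v ≠ 0 := fun h => hv (by simpa using b.repr.injective (by simpa using h))
  obtain ⟨j, hj⟩ : ∃ j, b.repr v j ≠ 0 := by
    by_contra h
    push_neg at h
    exact hrepr (Finsupp.ext h)
  refine ⟨(b.repr v j)⁻¹ • (b.coord j), ?_⟩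
  simp only [LinearMap.smul_apply, Module.Basis.coord_apply, smul_eq_mul]
  exact inv_mul_cancel₀ hj

-- existence of a separating additive character
lemma exists_chi (ℓ : ℕ) [Fact ℓ.Prime] {G : Type*} [AddCommGroup G] [Finite G] {g : G}
    (hg : ¬ ∃ b : G, g = ℓ • b) : ∃ χ : G →+ ZMod ℓ, χ g = 1 := by
  classical
  set f := smulHom ℓ G
  have hQ : ∀ q : G ⧸ f.range, ℓ • q = 0 := by
    intro q
    induction q using QuotientAddGroup.induction_on with
    | H x =>
      rw [← QuotientAddGroup.mk_nsmul, QuotientAddGroup.eq_zero_iff]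
      exact ⟨x, rfl⟩
  letI : Module (ZMod ℓ) (G ⧸ f.range) := AddCommGroup.zmodModule hQ
  have hmkg : (QuotientAddGroup.mk' f.range) g ≠ 0 := by
    intro h
    rw [QuotientAddGroup.mk'_apply, QuotientAddGroup.eq_zero_iff] at h
    obtain ⟨x, hx⟩ := h
    exact hg ⟨x, hx.symm⟩
  obtain ⟨lf, hlf⟩ := exists_functional (F := ZMod ℓ) hmkg
  refine ⟨lf.toAddMonoidHom.comp (QuotientAddGroup.mk' f.range), ?_⟩
  simpa using hlf

lemma zmod_nsmul_zero (ℓ : ℕ) (v : ZMod ℓ) : ℓ • v = 0 := by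
  rw [nsmul_eq_mul, ZMod.natCast_self, zero_mul]

lemma chi_kappa (ℓ : ℕ) [NeZero ℓ] {G : Type*} [AddCommGroup G] {g : G} (hg : ℓ • g = 0)
    (χ : G →+ ZMod ℓ) (hχ : χ g = 1) (e : ZMod ℓ) : χ (kappa ℓ g hg e) = e := by
  rw [kappa_apply, map_nsmul, hχ]
  rw [nsmul_eq_mul, mul_one]
  exact ZMod.natCast_rightInverse e

lemma exists_aut_to (ℓ : ℕ) [Fact ℓ.Prime] {G : Type*} [AddCommGroup G] [Finite G]
    (y : G × ZMod ℓ) (h1 : ℓ • y = 0)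
    (h2 : ¬ ∃ b : G × ZMod ℓ, y = ℓ • b) :
    ∃ φ : AddAut (G × ZMod ℓ), φ (0, 1) = y := by
  classical
  obtain ⟨g, c⟩ := y
  have hg : ℓ • g = 0 := congrArg Prod.fst h1
  set κ := kappa ℓ g hg with hκ
  by_cases hc : c = 0
  · -- then g is not an ℓ-th multiple
    have hgnot : ¬ ∃ b : G, g = ℓ • b := by
      rintro ⟨b, hb⟩
      exact h2 ⟨(b, 0), by simp [Prod.ext_iff, hb, hc, zmod_nsmul_zero]⟩
    obtain ⟨χ, hχ⟩ := exists_chi ℓ hgnot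
    let ψ : G × ZMod ℓ →+ G × ZMod ℓ :=
      { toFun := fun p => (p.1 + κ p.2, (c - 1) * χ p.1 + c * p.2)
        map_zero' := by simp
        map_add' := by
          intro p q
          simp only [Prod.fst_add, Prod.snd_add, map_add, Prod.mk_add_mk, Prod.mk.injEq]
          constructor
          · abel
          · ring }
    have hinj : Function.Injective ψ := by
      rw [injective_iff_map_eq_zero]
      intro p hp
      have e1 : p.1 + κ p.2 = 0 := congrArg Prod.fst hp
      have e2 : (c - 1) * χ p.1 + c * p.2 = 0 := congrArg Prod.snd hp
      have hp1 : p.1 = -κ p.2 := by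
        rw [eq_neg_iff_add_eq_zero]
        exact e1
      have hχ1 : χ p.1 = -p.2 := by
        rw [hp1, map_neg, hκ, chi_kappa ℓ hg χ hχ]
      rw [hχ1] at e2
      have hp2 : p.2 = 0 := by linear_combination e2
      have hp1' : p.1 = 0 := by rw [hp1, hp2, map_zero, neg_zero]
      exact Prod.ext_iff.mpr ⟨hp1', hp2⟩
    have hbij : Function.Bijective ψ := (Finite.injective_iff_bijective).mp hinj
    refine ⟨AddEquiv.ofBijective ψ hbij, ?_⟩
    show ψ (0, 1) = (g, c)
    simp only [ψ, AddMonoidHom.coe_mk, ZeroHom.coe_mk, hκ]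
    rw [kappa_one]
    simp
  · let ψ : G × ZMod ℓ →+ G × ZMod ℓ :=
      { toFun := fun p => (p.1 + κ p.2, c * p.2)
        map_zero' := by simp
        map_add' := by
          intro p q
          simp only [Prod.fst_add, Prod.snd_add, map_add, Prod.mk_add_mk, Prod.mk.injEq]
          constructor
          · abel
          · ring }
    have hinj : Function.Injective ψ := by
      rw [injective_iff_map_eq_zero]
      intro p hp
      have e1 : p.1 + κ p.2 = 0 := congrArg Prod.fst hp
      have e2 : c * p.2 = 0 := congrArg Prod.snd hp
      have hp2 : p.2 = 0 := by
        rcases mul_eq_zero.mp e2 with h | h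
        · exact absurd h hc
        · exact h
      have hp1 : p.1 = 0 := by
        rw [hp2, map_zero, add_zero] at e1
        exact e1
      exact Prod.ext_iff.mpr ⟨hp1, hp2⟩
    have hbij : Function.Bijective ψ := (Finite.injective_iff_bijective).mp hinj
    refine ⟨AddEquiv.ofBijective ψ hbij, ?_⟩
    show ψ (0, 1) = (g, c)
    simp only [ψ, AddMonoidHom.coe_mk, ZeroHom.coe_mk, hκ]
    rw [kappa_one]
    simp

lemma phi_snd_fixed (ℓ : ℕ) [NeZero ℓ] {G : Type*} [AddCommGroup G]
    (φ : AddAut (G × ZMod ℓ)) (hφ : φ (0, 1) = (0, 1)) (e : ZMod ℓ) :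
    φ (0, e) = (0, e) := by
  have h1 : ((0 : G), e) = e.val • ((0 : G), (1 : ZMod ℓ)) := by
    rw [Prod.smul_mk, smul_zero]
    rw [nsmul_eq_mul, mul_one, ZMod.natCast_rightInverse e]
  rw [h1, map_nsmul, hφ, ← h1]

lemma card_stab (ℓ : ℕ) [Fact ℓ.Prime] {G : Type*} [AddCommGroup G] [Finite G] :
    Nat.card {φ : AddAut (G × ZMod ℓ) // φ (0, 1) = (0, 1)}
      = Nat.card (AddAut G) * Nat.card (G →+ ZMod ℓ) := by
  classical
  -- decompose φ(h,e) = (a h, γ h + e)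
  have key : ∀ (φ : AddAut (G × ZMod ℓ)), φ (0, 1) = (0, 1) → ∀ h e,
      φ (h, e) = ((φ (h, 0)).1 + 0, (φ (h, 0)).2 + e) := by
    intro φ hφ h e
    have : (h, e) = ((h, 0) : G × ZMod ℓ) + (0, e) := by simp
    rw [this, map_add, phi_snd_fixed ℓ φ hφ e]
    simp [Prod.ext_iff]
  -- the bijection
  let B : (AddAut G) × (G →+ ZMod ℓ) → {φ : AddAut (G × ZMod ℓ) // φ (0, 1) = (0, 1)} :=
    fun p => ⟨{ toFun := fun q => (p.1 q.1, p.2 q.1 + q.2)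
                invFun := fun q => (p.1.symm q.1, q.2 - p.2 (p.1.symm q.1))
                left_inv := by intro q; simp
                right_inv := by intro q; simp
                map_add' := by
                  intro q q'
                  simp only [Prod.fst_add, Prod.snd_add, map_add, Prod.mk_add_mk, Prod.mk.injEq]
                  constructor
                  · trivial
                  · ring }, by simp⟩
  let F : {φ : AddAut (G × ZMod ℓ) // φ (0, 1) = (0, 1)} → (AddAut G) × (G →+ ZMod ℓ) :=
    fun φp => by
      refine ⟨?_, (AddMonoidHom.snd G (ZMod ℓ)).comp
        ((φp.1 : G × ZMod ℓ ≃+ G × ZMod ℓ).toAddMonoidHom.comp (AddMonoidHom.inl G (ZMod ℓ)))⟩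
      refine AddEquiv.ofBijective ((AddMonoidHom.fst G (ZMod ℓ)).comp
        ((φp.1 : G × ZMod ℓ ≃+ G × ZMod ℓ).toAddMonoidHom.comp (AddMonoidHom.inl G (ZMod ℓ)))) ?_
      rw [← Finite.surjective_iff_bijective]
      intro h'
      obtain ⟨⟨h, e⟩, hhe⟩ := φp.1.surjective (h', 0)
      refine ⟨h, ?_⟩
      simp only [AddMonoidHom.coe_comp, Function.comp_apply, AddMonoidHom.inl_apply,
        AddEquiv.coe_toAddMonoidHom, AddMonoidHom.coe_fst]
      have := key φp.1 φp.2 h e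
      rw [hhe] at this
      have := congrArg Prod.fst this
      simp only [add_zero] at this ⊢
      exact this.symm
  have hFB : Function.LeftInverse F B := by
    intro p
    refine Prod.ext ?_ ?_
    · ext h
      rfl
    · ext h
      simp [F, B]
  have hBF : Function.RightInverse F B := by
    intro φp
    refine Subtype.ext ?_
    refine AddEquiv.ext ?_
    rintro ⟨h, e⟩
    have hk := key φp.1 φp.2 h e
    show ((_ : G), _) = _
    rw [hk]
    simp [F, B]
  have E : {φ : AddAut (G × ZMod ℓ) // φ (0, 1) = (0, 1)} ≃ (AddAut G) × (G →+ ZMod ℓ) :=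
    ⟨F, B, hBF, hFB⟩
  rw [Nat.card_congr E, Nat.card_prod]

lemma card_torsion_prod (ℓ : ℕ) [Fact ℓ.Prime] {G : Type*} [AddCommGroup G] [Finite G] (R : ℕ)
    (hR : Nat.card {a : G // ℓ • a = 0} = ℓ ^ R) :
    Nat.card {y : G × ZMod ℓ // ℓ • y = 0} = ℓ ^ (R + 1) := by
  have E : {y : G × ZMod ℓ // ℓ • y = 0} ≃ {a : G // ℓ • a = 0} × ZMod ℓ :=
    { toFun := fun y => (⟨y.1.1, congrArg Prod.fst y.2⟩, y.1.2)
      invFun := fun p => ⟨(p.1.1, p.2), by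
        have h1 : ℓ • (p.1.1 : G) = 0 := p.1.2
        have h2 : ℓ • p.2 = 0 := zmod_nsmul_zero ℓ p.2
        exact Prod.ext_iff.mpr ⟨h1, h2⟩⟩
      left_inv := fun y => rfl
      right_inv := fun p => rfl }
  rw [Nat.card_congr E, Nat.card_prod, hR, Nat.card_zmod, pow_succ]

lemma card_div_torsion_prod (ℓ : ℕ) [Fact ℓ.Prime] {G : Type*} [AddCommGroup G] [Finite G] (S : ℕ)
    (hS : Nat.card {a : G // (∃ b : G, a = ℓ • b) ∧ ℓ • a = 0} = ℓ ^ S) :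
    Nat.card {y : G × ZMod ℓ // ℓ • y = 0 ∧ ∃ b : G × ZMod ℓ, y = ℓ • b} = ℓ ^ S := by
  have E : {y : G × ZMod ℓ // ℓ • y = 0 ∧ ∃ b : G × ZMod ℓ, y = ℓ • b}
      ≃ {a : G // (∃ b : G, a = ℓ • b) ∧ ℓ • a = 0} :=
    { toFun := fun y => ⟨y.1.1, by
        obtain ⟨h0, b, hb⟩ := y.2
        exact ⟨⟨b.1, congrArg Prod.fst hb⟩, congrArg Prod.fst h0⟩⟩
      invFun := fun a => ⟨(a.1, 0), by
        obtain ⟨⟨b, hb⟩, h0⟩ := a.2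
        refine ⟨Prod.ext_iff.mpr ⟨h0, by simp⟩, (b, 0), Prod.ext_iff.mpr ⟨hb, ?_⟩⟩
        simp [zmod_nsmul_zero]⟩
      left_inv := fun y => by
        obtain ⟨h0, b, hb⟩ := y.2
        have h2 : (ℓ • b).2 = 0 := by
          rw [Prod.smul_snd]
          exact zmod_nsmul_zero ℓ b.2
        have h3 : y.1.2 = 0 := (congrArg Prod.snd hb).trans h2
        exact Subtype.ext (Prod.ext_iff.mpr ⟨rfl, h3.symm⟩)
      right_inv := fun a => rfl }
  rw [Nat.card_congr E, hS]

-- card of dual of a finite vector space = card of space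
lemma card_lhom_self (F : Type*) [Field F] (Q : Type*) [AddCommGroup Q] [Module F Q] [Finite Q]
    [Finite F] : Nat.card (Q →ₗ[F] F) = Nat.card Q := by
  have : Module.Finite F Q := Module.Finite.of_finite
  let b := Module.finBasis F Q
  set n := Module.finrank F Q
  have e1 : (Q →ₗ[F] F) ≃ₗ[F] ((Fin n → F) →ₗ[F] F) :=
    LinearEquiv.arrowCongr b.equivFun (LinearEquiv.refl F F)
  have e2 : ((Fin n → F) →ₗ[F] F) ≃ₗ[F] (Fin n → (F →ₗ[F] F)) :=
    (LinearMap.lsum F (fun _ : Fin n => F) F).symm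
  have e3 : (Fin n → (F →ₗ[F] F)) ≃ (Fin n → F) :=
    Equiv.piCongrRight fun _ => (LinearMap.ringLmapEquivSelf F F F).toEquiv
  calc Nat.card (Q →ₗ[F] F) = Nat.card (Fin n → F) :=
        Nat.card_congr (e1.toEquiv.trans (e2.toEquiv.trans e3))
    _ = Nat.card Q := (Nat.card_congr b.equivFun.toEquiv).symm

-- |Hom(G, ZMod ℓ)| = |G[ℓ]|
lemma card_hom_zmod (ℓ : ℕ) [Fact ℓ.Prime] (G : Type*) [AddCommGroup G] [Finite G] :
    Nat.card (G →+ ZMod ℓ) = Nat.card {a : G // ℓ • a = 0} := by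
  classical
  set f := smulHom ℓ G
  -- every hom kills the range of f
  have hkill : ∀ (χ : G →+ ZMod ℓ), f.range ≤ χ.ker := by
    rintro χ x ⟨y, rfl⟩
    simp only [AddMonoidHom.mem_ker, f, smulHom, AddMonoidHom.coe_mk, ZeroHom.coe_mk, map_nsmul]
    rw [nsmul_eq_mul, ZMod.natCast_self, zero_mul]
  have hQ : ∀ q : G ⧸ f.range, ℓ • q = 0 := by
    intro q
    induction q using QuotientAddGroup.induction_on with
    | H x =>
      rw [← QuotientAddGroup.mk_nsmul]
      rw [QuotientAddGroup.eq_zero_iff]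
      exact ⟨x, rfl⟩
  -- equiv between homs
  let E : (G ⧸ f.range →+ ZMod ℓ) ≃ (G →+ ZMod ℓ) :=
    { toFun := fun χ => χ.comp (QuotientAddGroup.mk' _)
      invFun := fun χ => QuotientAddGroup.lift _ χ (hkill χ)
      left_inv := by intro χ; ext q; rfl
      right_inv := by intro χ; ext x; rfl }
  letI : Module (ZMod ℓ) (G ⧸ f.range) := AddCommGroup.zmodModule hQ
  have hadd : Nat.card (G ⧸ f.range →+ ZMod ℓ) = Nat.card (G ⧸ f.range →ₗ[ZMod ℓ] ZMod ℓ) := by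
    refine Nat.card_congr ?_
    exact { toFun := fun χ => χ.toZModLinearMap ℓ
            invFun := fun χ => χ.toAddMonoidHom
            left_inv := fun χ => rfl
            right_inv := fun χ => by ext x; rfl }
  have hdual : Nat.card (G ⧸ f.range →ₗ[ZMod ℓ] ZMod ℓ) = Nat.card (G ⧸ f.range) := by
    exact card_lhom_self (ZMod ℓ) _
  have hker : Nat.card f.ker = Nat.card {a : G // ℓ • a = 0} := by
    refine Nat.card_congr (Equiv.subtypeEquivRight fun x => ?_)
    simp [f, smulHom, AddMonoidHom.mem_ker]
  calc Nat.card (G →+ ZMod ℓ) = Nat.card (G ⧸ f.range →+ ZMod ℓ) := (Nat.card_congr E).symm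
    _ = Nat.card (G ⧸ f.range) := by rw [hadd, hdual]
    _ = Nat.card f.ker := by
        have h1 : Nat.card G = Nat.card (G ⧸ f.range) * Nat.card f.range :=
          AddSubgroup.card_eq_card_quotient_mul_card_addSubgroup _
        have h2 : Nat.card G = Nat.card (G ⧸ f.ker) * Nat.card f.ker :=
          AddSubgroup.card_eq_card_quotient_mul_card_addSubgroup _
        have h3 : Nat.card (G ⧸ f.ker) = Nat.card f.range :=
          Nat.card_congr (QuotientAddGroup.quotientKerEquivRange f).toEquiv
        have hpos : 0 < Nat.card f.range := Nat.card_pos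
        rw [h3] at h2; rw [h2, mul_comm (Nat.card (G ⧸ f.range))] at h1
        exact (Nat.eq_of_mul_eq_mul_left hpos h1.symm)
    _ = Nat.card {a : G // ℓ • a = 0} := hker

lemma key_nat (ℓ : ℕ) [Fact ℓ.Prime] {G : Type*} [AddCommGroup G] [Finite G] (R S : ℕ)
    (hR : Nat.card {a : G // ℓ • a = 0} = ℓ ^ R)
    (hS : Nat.card {a : G // (∃ b : G, a = ℓ • b) ∧ ℓ • a = 0} = ℓ ^ S) :
    Nat.card (AddAut (G × ZMod ℓ)) = (ℓ ^ (R + 1) - ℓ ^ S) * (ℓ ^ R * Nat.card (AddAut G)) := by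
  classical
  set x₀ : G × ZMod ℓ := (0, 1) with hx₀
  have horb : Nat.card (AddAut (G × ZMod ℓ))
      = Nat.card (AddAction.orbit (AddAut (G × ZMod ℓ)) x₀)
        * Nat.card (AddAction.stabilizer (AddAut (G × ZMod ℓ)) x₀) := by
    rw [Nat.card_congr (AddAction.orbitEquivQuotientStabilizer (AddAut (G × ZMod ℓ)) x₀)]
    exact AddSubgroup.card_eq_card_quotient_mul_card_addSubgroup _
  have hT : AddAction.orbit (AddAut (G × ZMod ℓ)) x₀
      = {y : G × ZMod ℓ | ℓ • y = 0 ∧ ¬ ∃ b : G × ZMod ℓ, y = ℓ • b} := by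
    ext y
    constructor
    · rintro ⟨φ, rfl⟩
      have hx0 : ℓ • x₀ = 0 := Prod.ext_iff.mpr ⟨smul_zero ℓ, zmod_nsmul_zero ℓ 1⟩
      constructor
      · show ℓ • (φ +ᵥ x₀) = 0
        rw [AddAut.vadd_def, ← map_nsmul, hx0, map_zero]
      · rintro ⟨b, hb⟩
        have hb' : φ x₀ = ℓ • b := hb
        have : x₀ = ℓ • φ.symm b := by
          rw [← map_nsmul]
          have := congrArg φ.symm hb'
          simpa using this
        have h1 : (1 : ZMod ℓ) = ℓ • (φ.symm b).2 := congrArg Prod.snd this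
        rw [zmod_nsmul_zero] at h1
        exact one_ne_zero h1
    · rintro ⟨h1, h2⟩
      obtain ⟨φ, hφ⟩ := exists_aut_to ℓ y h1 h2
      exact ⟨φ, hφ⟩
  have hTcard : Nat.card (AddAction.orbit (AddAut (G × ZMod ℓ)) x₀) = ℓ ^ (R + 1) - ℓ ^ S := by
    have e0 : Nat.card (AddAction.orbit (AddAut (G × ZMod ℓ)) x₀)
        = Nat.card {y : G × ZMod ℓ // ℓ • y = 0 ∧ ¬ ∃ b : G × ZMod ℓ, y = ℓ • b} :=
      Nat.card_congr (Equiv.setCongr hT)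
    have E2 : {y : G × ZMod ℓ // (ℓ • y = 0) ∧ (∃ b : G × ZMod ℓ, y = ℓ • b)}
        ⊕ {y : G × ZMod ℓ // (ℓ • y = 0) ∧ ¬ (∃ b : G × ZMod ℓ, y = ℓ • b)}
        ≃ {y : G × ZMod ℓ // ℓ • y = 0} :=
      Equiv.trans
        (Equiv.sumCongr
          (Equiv.subtypeSubtypeEquivSubtypeInter (fun y : G × ZMod ℓ => ℓ • y = 0)
            (fun y => ∃ b : G × ZMod ℓ, y = ℓ • b)).symm
          (Equiv.subtypeSubtypeEquivSubtypeInter (fun y : G × ZMod ℓ => ℓ • y = 0)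
            (fun y => ¬ ∃ b : G × ZMod ℓ, y = ℓ • b)).symm)
        (Equiv.sumCompl _)
    have esplit := Nat.card_congr E2
    rw [Nat.card_sum] at esplit
    rw [card_torsion_prod ℓ R hR, card_div_torsion_prod ℓ S hS] at esplit
    rw [e0, ← esplit]
    omega
  have hstab : Nat.card (AddAction.stabilizer (AddAut (G × ZMod ℓ)) x₀)
      = ℓ ^ R * Nat.card (AddAut G) := by
    have e1 : Nat.card (AddAction.stabilizer (AddAut (G × ZMod ℓ)) x₀)
        = Nat.card {φ : AddAut (G × ZMod ℓ) // φ (0, 1) = (0, 1)} := by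
      apply Nat.card_congr
      apply Equiv.subtypeEquivRight
      intro φ
      rw [AddAction.mem_stabilizer_iff, AddAut.vadd_def, hx₀]
    rw [e1, card_stab ℓ, card_hom_zmod ℓ G, hR, mul_comm]
  rw [horb, hTcard, hstab]

-- cardinality of AddAut is invariant under AddEquiv
lemma card_addAut_congr {G H : Type*} [AddCommGroup G] [AddCommGroup H] (e : G ≃+ H) :
    Nat.card (AddAut G) = Nat.card (AddAut H) := by
  apply Nat.card_congr
  exact { toFun := fun φ => (e.symm.trans φ).trans e
          invFun := fun ψ => (e.trans ψ).trans e.symm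
          left_inv := fun φ => by ext x; simp
          right_inv := fun ψ => by ext x; simp }

section transport
variable (ℓ : ℕ) {G V : Type*} [AddCommGroup G] [AddCommGroup V]

lemma card_tor_prod' (hV : ∀ v : V, ℓ • v = 0) :
    Nat.card {y : G × V // ℓ • y = 0} = Nat.card ({a : G // ℓ • a = 0} × V) := by
  apply Nat.card_congr
  exact { toFun := fun y => (⟨y.1.1, congrArg Prod.fst y.2⟩, y.1.2)
          invFun := fun p => ⟨(p.1.1, p.2), Prod.ext_iff.mpr ⟨p.1.2, hV p.2⟩⟩
          left_inv := fun y => rfl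
          right_inv := fun p => rfl }

lemma card_div_tor_prod' (hV : ∀ v : V, ℓ • v = 0) :
    Nat.card {y : G × V // (∃ b : G × V, y = ℓ • b) ∧ ℓ • y = 0}
      = Nat.card {a : G // (∃ b : G, a = ℓ • b) ∧ ℓ • a = 0} := by
  apply Nat.card_congr
  exact { toFun := fun y => ⟨y.1.1, by
            obtain ⟨⟨b, hb⟩, h0⟩ := y.2
            exact ⟨⟨b.1, congrArg Prod.fst hb⟩, congrArg Prod.fst h0⟩⟩
          invFun := fun a => ⟨(a.1, 0), by
            obtain ⟨⟨b, hb⟩, h0⟩ := a.2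
            refine ⟨⟨(b, 0), Prod.ext_iff.mpr ⟨hb, (hV _).symm⟩⟩, Prod.ext_iff.mpr ⟨h0, by simp⟩⟩⟩
          left_inv := fun y => by
            obtain ⟨⟨b, hb⟩, h0⟩ := y.2
            have h3 : y.1.2 = 0 := (congrArg Prod.snd hb).trans (hV b.2)
            exact Subtype.ext (Prod.ext_iff.mpr ⟨rfl, h3.symm⟩)
          right_inv := fun a => rfl }

end transport

-- the structural equivalences
def finSuccAddEquiv (M : Type*) [AddCommGroup M] (k : ℕ) :
    (Fin (k + 1) → M) ≃+ (Fin k → M) × M where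
  toFun x := (fun j => x j.castSucc, x (Fin.last k))
  invFun p := Fin.snoc p.1 p.2
  left_inv x := by
    funext j
    refine Fin.lastCases ?_ ?_ j
    · exact Fin.snoc_last _ _
    · intro i
      exact Fin.snoc_castSucc _ _ _
  right_inv p := by
    refine Prod.ext ?_ ?_
    · funext j
      simp
    · simp
  map_add' x y := rfl

def finZeroAddEquiv (A M : Type*) [AddCommGroup A] [AddCommGroup M] :
    (A × (Fin 0 → M)) ≃+ A where
  toFun x := x.1
  invFun a := (a, 0)
  left_inv x := by
    refine Prod.ext rfl ?_
    funext j
    exact absurd j.2 (by omega)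
  right_inv a := rfl
  map_add' x y := rfl

def stepAddEquiv (A M : Type*) [AddCommGroup A] [AddCommGroup M] (k : ℕ) :
    (A × (Fin (k + 1) → M)) ≃+ ((A × (Fin k → M)) × M) :=
  ((AddEquiv.refl A).prodCongr (finSuccAddEquiv M k)).trans
    ((AddEquiv.prodAssoc).symm : A × ((Fin k → M) × M) ≃+ (A × (Fin k → M)) × M)

lemma lPoch_pos (ℓ : ℕ) (hℓ : 1 < ℓ) (m : ℕ) : 0 < lPoch ℓ m := by
  apply Finset.prod_pos
  intro j _
  have h1 : ((ℓ : ℝ))⁻¹ < 1 := by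
    rw [inv_lt_one_iff₀]
    right
    exact_mod_cast hℓ
  have h0 : (0:ℝ) ≤ ((ℓ : ℝ))⁻¹ := by positivity
  have := pow_lt_one₀ h0 h1 (by omega : j + 1 ≠ 0)
  linarith

/-- For a finite abelian `ℓ`-group `A` of `ℓ`-rank `r` and `ℓ²`-rank `s`, and
`A_{⊕i} = A ⊕ (Z/ℓ)^i`,
`|Aut(A_{⊕i})| = ℓ^{2ir+i²} ((ℓ^{-1})_{r−s+i}/(ℓ^{-1})_{r−s}) |Aut(A)|`.
The `ℓ`-rank is encoded by `|A[ℓ]| = ℓ^r` and the `ℓ²`-rank by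
`|(ℓA)[ℓ]| = ℓ^s`. -/
theorem card_aut_add_elementary (ℓ : ℕ) (hℓ : ℓ.Prime)
    (A : Type*) [AddCommGroup A] [Finite A]
    (hℓgrp : ∀ a : A, ∃ n : ℕ, (ℓ ^ n) • a = 0)
    (r s : ℕ)
    (hr : Nat.card {a : A // ℓ • a = 0} = ℓ ^ r)
    (hs : Nat.card {a : A // (∃ b : A, a = ℓ • b) ∧ ℓ • a = 0} = ℓ ^ s)
    (i : ℕ) :
    (Nat.card (AddAut (A × (Fin i → ZMod ℓ))) : ℝ)
      = (ℓ : ℝ) ^ (2 * i * r + i ^ 2) * (lPoch ℓ (r - s + i) / lPoch ℓ (r - s)) *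
        (Nat.card (AddAut A) : ℝ) := by
  haveI : Fact ℓ.Prime := ⟨hℓ⟩
  have hℓ1 : 1 < ℓ := hℓ.one_lt
  have hx0 : (0:ℝ) < (ℓ:ℝ) := by exact_mod_cast Nat.lt_of_lt_of_le Nat.zero_lt_one hℓ1.le
  -- s ≤ r
  have hsr : s ≤ r := by
    have hinj : Function.Injective
        (fun a : {a : A // (∃ b : A, a = ℓ • b) ∧ ℓ • a = 0} =>
          (⟨a.1, a.2.2⟩ : {a : A // ℓ • a = 0})) := by
      intro a b h
      simpa [Subtype.ext_iff] using h
    have hle := Nat.card_le_card_of_injective _ hinj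
    rw [hr, hs] at hle
    exact (Nat.pow_le_pow_iff_right hℓ1).mp hle
  have hVk : ∀ k (v : Fin k → ZMod ℓ), ℓ • v = 0 := fun k v =>
    funext fun j => zmod_nsmul_zero ℓ (v j)
  have hrk : ∀ k, Nat.card {x : A × (Fin k → ZMod ℓ) // ℓ • x = 0} = ℓ ^ (r + k) := by
    intro k
    rw [card_tor_prod' ℓ (hVk k), Nat.card_prod, hr, Nat.card_fun, Nat.card_zmod,
      Nat.card_eq_fintype_card, Fintype.card_fin, ← pow_add]
  have hsk : ∀ k, Nat.card {x : A × (Fin k → ZMod ℓ) //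
      (∃ b : A × (Fin k → ZMod ℓ), x = ℓ • b) ∧ ℓ • x = 0} = ℓ ^ s := by
    intro k
    rw [card_div_tor_prod' ℓ (hVk k), hs]
  have hrec : ∀ k, Nat.card (AddAut (A × (Fin (k+1) → ZMod ℓ)))
      = (ℓ ^ (r + k + 1) - ℓ ^ s) * (ℓ ^ (r + k) * Nat.card (AddAut (A × (Fin k → ZMod ℓ)))) := by
    intro k
    rw [card_addAut_congr (stepAddEquiv A (ZMod ℓ) k)]
    exact key_nat ℓ (r + k) s (hrk k) (hsk k)
  induction i with
  | zero =>
    rw [card_addAut_congr (finZeroAddEquiv A (ZMod ℓ))]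
    rw [show 2*0*r+0^2 = 0 from by ring, pow_zero, add_zero, one_mul,
      div_self (ne_of_gt (lPoch_pos ℓ hℓ1 (r-s))), one_mul]
  | succ k ih =>
    have hle : ℓ ^ s ≤ ℓ ^ (r + k + 1) :=
      Nat.pow_le_pow_right (by omega) (by omega)
    rw [hrec k, Nat.cast_mul, Nat.cast_sub hle, Nat.cast_mul, Nat.cast_pow, Nat.cast_pow,
      Nat.cast_pow, ih]
    have hne : ((ℓ:ℝ))^(r-s+k+1) ≠ 0 := pow_ne_zero _ (ne_of_gt hx0)
    have hfac : ((ℓ:ℝ))^(r+k+1) - (ℓ:ℝ)^s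
        = (ℓ:ℝ)^(r+k+1) * (1 - ((ℓ:ℝ))⁻¹^(r-s+k+1)) := by
      rw [mul_sub, mul_one, inv_pow, show r+k+1 = (r-s+k+1)+s from by omega, pow_add]
      field_simp
    have hL : lPoch ℓ (r - s + (k+1)) = lPoch ℓ (r-s+k) * (1 - ((ℓ:ℝ))⁻¹^(r-s+k+1)) := by
      simp only [lPoch, ← Finset.prod_range_succ]
      rfl
    have hexp : (2*(k+1)*r+(k+1)^2) = (r+k+1) + ((r+k) + (2*k*r+k^2)) := by ring
    rw [hfac, hL, hexp, pow_add, pow_add]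
    have hD : lPoch ℓ (r-s) ≠ 0 := ne_of_gt (lPoch_pos ℓ hℓ1 (r-s))
    field_simp
    ring
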